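/- If $v$ and $v'$ are distinct vertices of a graph $G$ that are false or true twins, and $G - v'$ is a cograph, then $G$ is a cograph. -/

import Mathlib

/-- A cograph is a graph with no induced subgraph isomorphic to the path `P₄`. -/
def IsCograph {V : Type*} (G : SimpleGraph V) : Prop :=
  IsEmpty (SimpleGraph.pathGraph 4 ↪g G)

lemma p4_no_twins : ∀ a b : Fin 4, a ≠ b → ∃ i : Fin 4, i ≠ a ∧ i ≠ b ∧
    ¬(((SimpleGraph.pathGraph 4).Adj a i) ↔ (SimpleGraph.pathGraph 4).Adj b i) := by
  simp only [SimpleGraph.pathGraph_adj]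
  decide

theorem cograph_of_twin_deletion {V : Type*} (G : SimpleGraph V) (v v' : V) (hne : v ≠ v')
    (htwin : (¬ G.Adj v v' ∧ ∀ w, G.Adj v w ↔ G.Adj v' w) ∨
      (G.Adj v v' ∧ ∀ w, w ≠ v → w ≠ v' → (G.Adj v w ↔ G.Adj v' w)))
    (hdel : IsCograph (G.induce {w | w ≠ v'})) :
    IsCograph G := by
  constructor
  intro f
  have twin : ∀ w, w ≠ v → w ≠ v' → (G.Adj v w ↔ G.Adj v' w) := by
    rcases htwin with ⟨_, h⟩ | ⟨_, h⟩
    · exact fun w _ _ => h w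
    · exact h
  by_cases hv : ∃ a, f a = v
  · by_cases hv' : ∃ b, f b = v'
    · obtain ⟨a, ha⟩ := hv
      obtain ⟨b, hb⟩ := hv'
      have hab : a ≠ b := fun h => hne (by rw [← ha, ← hb, h])
      obtain ⟨i, hia, hib, hcon⟩ := p4_no_twins a b hab
      apply hcon
      have hfiv : f i ≠ v := fun h => hia (f.injective (by rw [h, ha]))
      have hfiv' : f i ≠ v' := fun h => hib (f.injective (by rw [h, hb]))
      rw [← f.map_adj_iff, ← f.map_adj_iff, ha, hb]
      exact twin (f i) hfiv hfiv'
    · push_neg at hv'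
      exact hdel.false ⟨⟨fun i => ⟨f i, hv' i⟩, fun i j h =>
        f.injective (congrArg Subtype.val h)⟩, by
          intro i j
          simp only [SimpleGraph.comap_adj, Function.Embedding.coeFn_mk,
            Function.Embedding.coe_subtype]
          exact f.map_adj_iff⟩
  · push_neg at hv
    classical
    refine hdel.false ⟨⟨fun i => if h : f i = v' then ⟨v, hne⟩ else ⟨f i, h⟩, ?_⟩, ?_⟩
    · intro i j h
      have h' := congrArg Subtype.val h
      by_cases hi : f i = v'
      · by_cases hj : f j = v'
        · exact f.injective (hi.trans hj.symm)
        · simp only [dif_pos hi, dif_neg hj] at h'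
          exact absurd h'.symm (hv j)
      · by_cases hj : f j = v'
        · simp only [dif_neg hi, dif_pos hj] at h'
          exact absurd h' (hv i)
        · simp only [dif_neg hi, dif_neg hj] at h'
          exact f.injective h'
    · intro i j
      simp only [SimpleGraph.comap_adj, Function.Embedding.coeFn_mk,
        Function.Embedding.coe_subtype]
      change G.Adj (↑(if h : f i = v' then (⟨v, hne⟩ : {w // w ≠ v'}) else ⟨f i, h⟩)) (↑(if h : f j = v' then (⟨v, hne⟩ : {w // w ≠ v'}) else ⟨f j, h⟩)) ↔ _
      by_cases hi : f i = v'
      · by_cases hj : f j = v'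
        · rw [show i = j from f.injective (hi.trans hj.symm)]
          simp
        · simp only [dif_pos hi, dif_neg hj]
          rw [← f.map_adj_iff, hi]
          exact twin (f j) (hv j) hj
      · by_cases hj : f j = v'
        · simp only [dif_neg hi, dif_pos hj]
          rw [← f.map_adj_iff, hj, G.adj_comm (f i) v, G.adj_comm (f i) v']
          exact twin (f i) (hv i) hi
        · simp only [dif_neg hi, dif_neg hj]
          exact f.map_adj_iff
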